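/- Let 𝒞 be admissible and contravariantly finite in 𝒜. Every short Hom_𝒜(𝒞,−)-exact exact sequence 0 → L → M → N → 0 in 𝒜 induces, for each object of 𝒜 as second argument, a long exact sequence 0 → Hom(N,−) → Hom(M,−) → Hom(L,−) → Ext¹_𝒞(N,−) → ⋯ → Ext^n_𝒞(N,−) → Ext^n_𝒞(M,−) → Ext^n_𝒞(L,−) → Ext^{n+1}_𝒞(N,−) → ⋯ of relative Ext functors. -/

import Mathlib

open CategoryTheory Limits

universe v u

variable {A : Type u} [Category.{v} A] [Abelian A]

/-- A complex `X` is `𝒞`-acyclic if `Hom_𝒜(C, X)` is an acyclic complex of abelian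
groups for every `C ∈ 𝒞`. -/
def CAcyclic (𝒞 : Set A) (X : CochainComplex A ℤ) : Prop :=
  ∀ C ∈ 𝒞, ∀ i : ℤ,
    (((preadditiveCoyoneda.obj (Opposite.op C)).mapHomologicalComplex
      (ComplexShape.up ℤ)).obj X).ExactAt i

/-- A chain map `f` is a `𝒞`-quasi-isomorphism if `Hom_𝒜(C, f)` is a quasi-isomorphism
for every `C ∈ 𝒞`. -/
def CQuasiIso (𝒞 : Set A) {X Y : CochainComplex A ℤ} (f : X ⟶ Y) : Prop :=
  ∀ C ∈ 𝒞, QuasiIso (((preadditiveCoyoneda.obj (Opposite.op C)).mapHomologicalComplex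
      (ComplexShape.up ℤ)).map f)

/-- A cochain complex is bounded above. -/
def BoundedAbove (X : CochainComplex A ℤ) : Prop :=
  ∃ n : ℤ, ∀ i : ℤ, n < i → IsZero (X.X i)

/-- `f : C ⟶ M` is a right `𝒞`-approximation of `M`. -/
def IsRightApprox (𝒞 : Set A) {C M : A} (f : C ⟶ M) : Prop :=
  C ∈ 𝒞 ∧ ∀ C' ∈ 𝒞, ∀ g : C' ⟶ M, ∃ h : C' ⟶ C, h ≫ f = g

/-- `𝒞` is contravariantly finite in `𝒜`: every object has a right `𝒞`-approximation. -/
def ContravariantlyFinite (𝒞 : Set A) : Prop :=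
  ∀ M : A, ∃ (C : A) (f : C ⟶ M), IsRightApprox 𝒞 f

/-- `𝒞` is admissible: every right `𝒞`-approximation is an epimorphism. -/
def Admissible (𝒞 : Set A) : Prop :=
  ∀ ⦃C M : A⦄ (f : C ⟶ M), IsRightApprox 𝒞 f → Epi f

/-- `(P, π)` is a left `𝒞`-resolution of `M`: a `Hom_𝒜(𝒞,-)`-exact augmented complex
`⋯ → P⁻¹ → P⁰ → M → 0` with all terms in `𝒞` (indexed cohomologically, concentrated
in degrees `≤ 0`). -/
def IsLeftRes (𝒞 : Set A) (M : A) (P : CochainComplex A ℤ) (π : P.X 0 ⟶ M) : Prop :=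
  (∀ i : ℤ, 0 < i → IsZero (P.X i)) ∧
  (∀ i : ℤ, i ≤ 0 → P.X i ∈ 𝒞) ∧
  P.d (-1) 0 ≫ π = 0 ∧
  ∀ C ∈ 𝒞,
    (∀ g : C ⟶ M, ∃ h : C ⟶ P.X 0, h ≫ π = g) ∧
    (∀ g : C ⟶ P.X 0, g ≫ π = 0 → ∃ h : C ⟶ P.X (-1), h ≫ P.d (-1) 0 = g) ∧
    (∀ i : ℤ, i < 0 → ∀ g : C ⟶ P.X i, g ≫ P.d i (i + 1) = 0 →
      ∃ h : C ⟶ P.X (i - 1), h ≫ P.d (i - 1) i = g)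

/-- Vanishing of `Ext^n_𝒞(M, N) = Hⁿ Hom_𝒜(P, N)` computed from a left `𝒞`-resolution
`P` of `M`: every `n`-cocycle of `Hom_𝒜(P, N)` is a coboundary. -/
def ExtVanish (P : CochainComplex A ℤ) (N : A) (n : ℤ) : Prop :=
  ∀ g : P.X (-n) ⟶ N, P.d (-n - 1) (-n) ≫ g = 0 →
    ∃ h : P.X (-n + 1) ⟶ N, P.d (-n) (-n + 1) ≫ h = g

/-- `𝒞` is closed under direct summands (hence under isomorphisms). -/
def SummandClosed (𝒞 : Set A) : Prop :=
  ∀ (X Y : A) (ι : Y ⟶ X) (r : X ⟶ Y), ι ≫ r = 𝟙 Y → X ∈ 𝒞 → Y ∈ 𝒞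

/-- Precomposition with `f` as a homomorphism of abelian groups of morphisms. -/
def preComp {X Y : A} (Z : A) (f : X ⟶ Y) : (Y ⟶ Z) →+ (X ⟶ Z) :=
  AddMonoidHom.mk' (fun g => f ≫ g) (fun a b => Preadditive.comp_add _ _ _ _ _ _)

@[simp] lemma preComp_apply {X Y Z : A} (f : X ⟶ Y) (g : Y ⟶ Z) :
    preComp Z f g = f ≫ g := rfl

/-- The `n`-cocycles of the complex `Hom_𝒜(P, Y)`. -/
def extCocycles (P : CochainComplex A ℤ) (Y : A) (n : ℤ) :
    AddSubgroup (P.X (-n) ⟶ Y) :=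
  (preComp Y (P.d (-n - 1) (-n))).ker

/-- The `n`-coboundaries of the complex `Hom_𝒜(P, Y)`. -/
def extBoundaries (P : CochainComplex A ℤ) (Y : A) (n : ℤ) :
    AddSubgroup (P.X (-n) ⟶ Y) :=
  (preComp Y (P.d (-n) (-n + 1)) : (P.X (-n + 1) ⟶ Y) →+ (P.X (-n) ⟶ Y)).range

/-- The relative Ext group `Ext^n_𝒞(M, Y)` computed from a left `𝒞`-resolution `P`
of `M`: cocycles modulo coboundaries of `Hom_𝒜(P, Y)`. -/
def ExtGrp (P : CochainComplex A ℤ) (Y : A) (n : ℤ) : Type v :=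
  extCocycles P Y n ⧸ (extBoundaries P Y n).addSubgroupOf (extCocycles P Y n)

noncomputable instance (P : CochainComplex A ℤ) (Y : A) (n : ℤ) :
    AddCommGroup (ExtGrp P Y n) := by
  dsimp only [ExtGrp]; infer_instance

/-- The homomorphism on cocycles induced by a chain map `φ : P ⟶ P'`. -/
def extCocyclesMap {P P' : CochainComplex A ℤ} (φ : P ⟶ P') (Y : A) (n : ℤ) :
    extCocycles P' Y n →+ extCocycles P Y n :=
  AddMonoidHom.mk' (fun g => ⟨φ.f (-n) ≫ g.1, by
      have hg := g.2
      simp only [extCocycles, AddMonoidHom.mem_ker, preComp_apply] at hg ⊢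
      rw [← Category.assoc, ← HomologicalComplex.Hom.comm φ (-n-1) (-n),
        Category.assoc, hg, Limits.comp_zero]⟩)
    (fun a b => by ext; simp [Preadditive.comp_add])

/-- The homomorphism `Ext^n(M', Y) → Ext^n(M, Y)` induced by a chain map `φ : P ⟶ P'`
between left `𝒞`-resolutions. -/
def extMap {P P' : CochainComplex A ℤ} (φ : P ⟶ P') (Y : A) (n : ℤ) :
    ExtGrp P' Y n →+ ExtGrp P Y n :=
  QuotientAddGroup.map _ _ (extCocyclesMap φ Y n) (by
    rintro ⟨g, hg⟩ hmem
    simp only [AddSubgroup.mem_addSubgroupOf, extBoundaries, AddMonoidHom.mem_range,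
      preComp_apply] at hmem ⊢
    obtain ⟨h, hh⟩ := hmem
    refine ⟨φ.f (-n + 1) ≫ h, ?_⟩
    change P.d (-n) (-n+1) ≫ φ.f (-n+1) ≫ h = φ.f (-n) ≫ g
    rw [← Category.assoc, ← HomologicalComplex.Hom.comm φ (-n) (-n+1),
      Category.assoc, hh])

open scoped Classical in
/-- Downward recursion. -/
noncomputable def chainRec {T : ℤ → Type v} (dflt : ∀ k, T k) (t0 : T 0)
    (R : ∀ k : ℤ, T k → T (k + 1) → Prop) : ∀ k : ℤ, T k
  | k =>
    if h0 : k = 0 then cast (congrArg T h0).symm t0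
    else if _ : k < 0 then
      (if h : ∃ t : T k, R k t (chainRec dflt t0 R (k + 1)) then h.choose else dflt k)
    else dflt k
  termination_by k => (-k).toNat
  decreasing_by simp_wf; omega

lemma chainRec_zero {T : ℤ → Type v} (dflt : ∀ k, T k) (t0 : T 0)
    (R : ∀ k : ℤ, T k → T (k + 1) → Prop) : chainRec dflt t0 R 0 = t0 := by
  rw [chainRec]; simp

lemma chainRec_pos {T : ℤ → Type v} (dflt : ∀ k, T k) (t0 : T 0)
    (R : ∀ k : ℤ, T k → T (k + 1) → Prop) (k : ℤ) (hk : 0 < k) :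
    chainRec dflt t0 R k = dflt k := by
  rw [chainRec]; rw [dif_neg (by omega), dif_neg (by omega)]

lemma chainRec_spec {T : ℤ → Type v} (dflt : ∀ k, T k) (t0 : T 0)
    (R : ∀ k : ℤ, T k → T (k + 1) → Prop)
    (hbase : ∃ t : T (-1), R (-1) t t0)
    (hstep : ∀ k : ℤ, k < -1 → ∀ (t' : T (k + 1)) (t'' : T (k + 1 + 1)),
      R (k + 1) t' t'' → ∃ t : T k, R k t t') :
    ∀ k : ℤ, k < 0 → R k (chainRec dflt t0 R k) (chainRec dflt t0 R (k + 1)) := by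
  have key : ∀ n : ℕ, ∀ k : ℤ, k = -1 - n →
      R k (chainRec dflt t0 R k) (chainRec dflt t0 R (k + 1)) := by
    intro n
    induction n with
    | zero =>
      intro k hk
      obtain rfl : k = -1 := by omega
      have hex : ∃ t : T (-1), R (-1) t (chainRec dflt t0 R (-1 + 1)) := by
        have : chainRec dflt t0 R (-1 + 1) = t0 := chainRec_zero dflt t0 R
        rw [this]; exact hbase
      have : chainRec dflt t0 R (-1) = hex.choose := by
        rw [chainRec]; rw [dif_neg (by omega), dif_pos (by omega), dif_pos hex]
      rw [this]; exact hex.choose_spec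
    | succ m ih =>
      intro k hk
      have hprev : R (k + 1) (chainRec dflt t0 R (k + 1)) (chainRec dflt t0 R (k + 1 + 1)) :=
        ih (k + 1) (by push_cast; omega)
      have hex : ∃ t : T k, R k t (chainRec dflt t0 R (k + 1)) :=
        hstep k (by push_cast at hk ⊢; omega) (chainRec dflt t0 R (k + 1))
          (chainRec dflt t0 R (k + 1 + 1)) hprev
      have : chainRec dflt t0 R k = hex.choose := by
        rw [chainRec]; rw [dif_neg (by push_cast at hk; omega), dif_pos (by push_cast at hk; omega), dif_pos hex]
      rw [this]; exact hex.choose_spec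
  intro k hk
  exact key (-1 - k).toNat k (by omega)

lemma eqToHom_comp_d (P : CochainComplex A ℤ) {i i' j : ℤ} (h : i = i') :
    eqToHom (congrArg P.X h) ≫ P.d i' j = P.d i j := by subst h; simp

lemma d_comp_eqToHom (P : CochainComplex A ℤ) {i j j' : ℤ} (h : j = j') :
    P.d i j ≫ eqToHom (congrArg P.X h) = P.d i j' := by subst h; simp

lemma d_comp_eq_zero_congr (P : CochainComplex A ℤ) {a a' b : ℤ} (h : a = a') {Z : A}
    (g : P.X b ⟶ Z) : P.d a b ≫ g = 0 ↔ P.d a' b ≫ g = 0 := by subst h; rfl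

lemma isZero_biprod {X Y : A} (hX : IsZero X) (hY : IsZero Y) : IsZero (X ⊞ Y) := by
  rw [IsZero.iff_id_eq_zero]
  apply biprod.hom_ext
  · exact hX.eq_of_tgt _ _
  · exact hY.eq_of_tgt _ _

lemma biprodFill {C₁ C₂ Z W V : A} (e : W ⟶ Z) (t : Z ⟶ V)
    (h₁ : ∀ g : C₁ ⟶ Z, g ≫ t = 0 → ∃ h : C₁ ⟶ W, h ≫ e = g)
    (h₂ : ∀ g : C₂ ⟶ Z, g ≫ t = 0 → ∃ h : C₂ ⟶ W, h ≫ e = g)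
    (g : C₁ ⊞ C₂ ⟶ Z) (hg : g ≫ t = 0) : ∃ h : C₁ ⊞ C₂ ⟶ W, h ≫ e = g := by
  obtain ⟨k₁, hk₁⟩ := h₁ (biprod.inl ≫ g) (by rw [Category.assoc, hg, comp_zero])
  obtain ⟨k₂, hk₂⟩ := h₂ (biprod.inr ≫ g) (by rw [Category.assoc, hg, comp_zero])
  refine ⟨biprod.desc k₁ k₂, ?_⟩
  apply biprod.hom_ext' <;> simp [hk₁, hk₂]

/-- Generic comparison lemma: lift a morphism to a chain map between augmented
complexes, given filler properties. -/
lemma exists_chainMap (P P' : CochainComplex A ℤ) {MM MM' : A}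
    (πP : P.X 0 ⟶ MM) (πP' : P'.X 0 ⟶ MM') (f : MM ⟶ MM')
    (hPz : ∀ i : ℤ, 0 < i → IsZero (P.X i))
    (hP'z1 : IsZero (P'.X 1))
    (hdπ : P.d (-1) 0 ≫ πP = 0)
    (fill0 : ∃ h : P.X 0 ⟶ P'.X 0, h ≫ πP' = πP ≫ f)
    (fill1 : ∀ g : P.X (-1) ⟶ P'.X 0, g ≫ πP' = 0 →
      ∃ h : P.X (-1) ⟶ P'.X (-1), h ≫ P'.d (-1) 0 = g)
    (fill : ∀ a b c : ℤ, a + 1 = b → b + 1 = c → b < 0 →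
      ∀ g : P.X a ⟶ P'.X b, g ≫ P'.d b c = 0 →
        ∃ h : P.X a ⟶ P'.X a, h ≫ P'.d a b = g) :
    ∃ φ : P ⟶ P', φ.f 0 ≫ πP' = πP ≫ f := by
  set T : ℤ → Type v := fun k => P.X k ⟶ P'.X k with hT
  set R : ∀ k : ℤ, T k → T (k + 1) → Prop :=
    fun k t t' => t ≫ P'.d k (k + 1) = P.d k (k + 1) ≫ t' with hR
  set t0 : T 0 := fill0.choose with ht0
  have ht0π : t0 ≫ πP' = πP ≫ f := fill0.choose_spec
  have hbase : ∃ t : T (-1), R (-1) t t0 := by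
    obtain ⟨h, hh⟩ := fill1 (P.d (-1) 0 ≫ t0)
      (by rw [Category.assoc, ht0π, ← Category.assoc, hdπ, zero_comp])
    exact ⟨h, hh⟩
  have hstep : ∀ k : ℤ, k < -1 → ∀ (t' : T (k + 1)) (t'' : T (k + 1 + 1)),
      R (k + 1) t' t'' → ∃ t : T k, R k t t' := by
    intro k hk t' t'' hprev
    obtain ⟨h, hh⟩ := fill k (k + 1) (k + 1 + 1) rfl rfl (by omega)
      (P.d k (k + 1) ≫ t')
      (by rw [Category.assoc, hprev, ← Category.assoc,
            HomologicalComplex.d_comp_d, zero_comp])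
    exact ⟨h, hh⟩
  set F := chainRec (fun k => (0 : T k)) t0 R with hF
  have spec := chainRec_spec (fun k => (0 : T k)) t0 R hbase hstep
  refine ⟨{ f := F, comm' := ?_ }, ?_⟩
  · intro i j hij
    change i + 1 = j at hij
    subst hij
    rcases lt_trichotomy i 0 with hi | hi | hi
    · exact spec i hi
    · subst hi
      exact hP'z1.eq_of_tgt _ _
    · exact (hPz i hi).eq_of_src _ _
  · show F 0 ≫ πP' = πP ≫ f
    rw [show F 0 = t0 from chainRec_zero _ _ _]
    exact ht0π

/-- Generic homotopy lemma: two chain maps agreeing on the augmentation are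
homotopic, given filler properties. -/
lemma exists_homotopy (P P' : CochainComplex A ℤ) {MM' : A} (πP' : P'.X 0 ⟶ MM')
    (hPz : ∀ i : ℤ, 0 < i → IsZero (P.X i))
    (F G : P ⟶ P') (hFG : F.f 0 ≫ πP' = G.f 0 ≫ πP')
    (fill1 : ∀ g : P.X 0 ⟶ P'.X 0, g ≫ πP' = 0 →
      ∃ h : P.X 0 ⟶ P'.X (-1), h ≫ P'.d (-1) 0 = g)
    (fill : ∀ a b c : ℤ, a + 1 = b → b + 1 = c → b < 0 →
      ∀ g : P.X b ⟶ P'.X b, g ≫ P'.d b c = 0 →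
        ∃ h : P.X b ⟶ P'.X a, h ≫ P'.d a b = g) :
    ∃ κ : ∀ a b : ℤ, P.X a ⟶ P'.X b,
      ∀ a b c : ℤ, a + 1 = b → b + 1 = c →
        F.f b - G.f b = P.d b c ≫ κ c b + κ b a ≫ P'.d a b := by
  set T : ℤ → Type v := fun k => P.X (k + 1) ⟶ P'.X k with hT
  set R : ∀ k : ℤ, T k → T (k + 1) → Prop := fun k t t' =>
    F.f (k + 1) - G.f (k + 1) = P.d (k + 1) (k + 1 + 1) ≫ t' + t ≫ P'.d k (k + 1) with hR
  have hbase : ∃ t : T (-1), R (-1) t (0 : T 0) := by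
    obtain ⟨h, hh⟩ := fill1 (F.f 0 - G.f 0) (by rw [Preadditive.sub_comp, hFG, sub_self])
    refine ⟨h, ?_⟩
    show F.f 0 - G.f 0 = P.d 0 1 ≫ (0 : P.X (0 + 1) ⟶ P'.X 0) + h ≫ P'.d (-1) 0
    rw [hh, comp_zero, zero_add]
  have hstep : ∀ k : ℤ, k < -1 → ∀ (t' : T (k + 1)) (t'' : T (k + 1 + 1)),
      R (k + 1) t' t'' → ∃ t : T k, R k t t' := by
    intro k hk t' t'' hprev
    have hprev' : t' ≫ P'.d (k + 1) (k + 1 + 1) =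
        F.f (k + 1 + 1) - G.f (k + 1 + 1) - P.d (k + 1 + 1) (k + 1 + 1 + 1) ≫ t'' := by
      rw [hprev]; abel
    obtain ⟨h, hh⟩ := fill k (k + 1) (k + 1 + 1) rfl rfl (by omega)
      (F.f (k + 1) - G.f (k + 1) - P.d (k + 1) (k + 1 + 1) ≫ t')
      (by
        rw [Preadditive.sub_comp, Preadditive.sub_comp, Category.assoc, hprev',
          F.comm (k + 1) (k + 1 + 1), G.comm (k + 1) (k + 1 + 1), Preadditive.comp_sub,
          Preadditive.comp_sub, ← Category.assoc (P.d (k + 1) (k + 1 + 1)),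
          HomologicalComplex.d_comp_d, zero_comp]
        abel)
    refine ⟨h, ?_⟩
    show F.f (k + 1) - G.f (k + 1) = P.d (k + 1) (k + 1 + 1) ≫ t' + h ≫ P'.d k (k + 1)
    rw [hh]; abel
  set κ' := chainRec (fun k => (0 : T k)) (0 : T 0) R with hκ'
  have spec := chainRec_spec (fun k => (0 : T k)) (0 : T 0) R hbase hstep
  classical
  refine ⟨fun a b => if h : b + 1 = a then eqToHom (congrArg P.X h.symm) ≫ κ' b else 0, ?_⟩
  have hκeq : ∀ Y : ℤ,
      (if h : Y + 1 = Y + 1 then eqToHom (congrArg P.X h.symm) ≫ κ' Y else 0) = κ' Y := by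
    intro Y
    rw [dif_pos rfl]
    have : eqToHom (congrArg P.X (Eq.symm (rfl : Y + 1 = Y + 1))) = 𝟙 (P.X (Y + 1)) := rfl
    rw [this, Category.id_comp]
  intro a b c ha hb
  subst ha; subst hb
  show F.f (a + 1) - G.f (a + 1) =
    P.d (a + 1) (a + 1 + 1) ≫
      (if h : (a + 1) + 1 = a + 1 + 1 then eqToHom (congrArg P.X h.symm) ≫ κ' (a + 1) else 0) +
    (if h : a + 1 = a + 1 then eqToHom (congrArg P.X h.symm) ≫ κ' a else 0) ≫ P'.d a (a + 1)
  rw [hκeq (a + 1), hκeq a]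
  rcases lt_or_ge a 0 with hneg | hpos
  · exact spec a hneg
  · have h1 : κ' (a + 1) = 0 := chainRec_pos _ _ _ _ (by omega)
    have h3 : F.f (a + 1) - G.f (a + 1) = 0 := by
      rw [(hPz (a + 1) (by omega)).eq_of_src (F.f (a + 1)) (G.f (a + 1)), sub_self]
    rcases lt_or_ge 0 a with hgt | hle
    · have h2 : κ' a = 0 := chainRec_pos _ _ _ _ hgt
      rw [h1, h2, h3, comp_zero, zero_comp, add_zero]
    · obtain rfl : a = 0 := by omega
      have h2 : κ' 0 = (0 : T 0) := chainRec_zero _ _ _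
      rw [h1, h2, h3, comp_zero, zero_comp, add_zero]


lemma res_fill0 {𝒞 : Set A} {M : A} {P : CochainComplex A ℤ} {π : P.X 0 ⟶ M}
    (hP : IsLeftRes 𝒞 M P π) {C : A} (hC : C ∈ 𝒞) (g : C ⟶ M) :
    ∃ h : C ⟶ P.X 0, h ≫ π = g :=
  (hP.2.2.2 C hC).1 g

lemma res_fill_top {𝒞 : Set A} {M : A} {P : CochainComplex A ℤ} {π : P.X 0 ⟶ M}
    (hP : IsLeftRes 𝒞 M P π) {C : A} (hC : C ∈ 𝒞) (a : ℤ) (ha : a + 1 = 0)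
    (g : C ⟶ P.X 0) (hg : g ≫ π = 0) : ∃ h : C ⟶ P.X a, h ≫ P.d a 0 = g := by
  obtain rfl : a = -1 := by omega
  exact (hP.2.2.2 C hC).2.1 g hg

lemma res_fill_step {𝒞 : Set A} {M : A} {P : CochainComplex A ℤ} {π : P.X 0 ⟶ M}
    (hP : IsLeftRes 𝒞 M P π) {C : A} (hC : C ∈ 𝒞) (a b c : ℤ) (hab : a + 1 = b)
    (hbc : b + 1 = c) (hb : b < 0) (g : C ⟶ P.X b) (hg : g ≫ P.d b c = 0) :
    ∃ h : C ⟶ P.X a, h ≫ P.d a b = g := by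
  subst hbc
  obtain rfl : a = b - 1 := by omega
  exact (hP.2.2.2 C hC).2.2 b hb g hg

lemma res_pi_epi {𝒞 : Set A} (hadm : Admissible 𝒞) {M : A} {P : CochainComplex A ℤ}
    {π : P.X 0 ⟶ M} (hP : IsLeftRes 𝒞 M P π) : Epi π :=
  hadm π ⟨hP.2.1 0 le_rfl, fun C' hC' g => (hP.2.2.2 C' hC').1 g⟩

lemma exists_Q (𝒞 : Set A)
    {L M N : A} (i : L ⟶ M) (p : M ⟶ N) (hw : i ≫ p = 0)
    (hmono : Mono i) (hex : (ShortComplex.mk i p hw).Exact)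
    (hCex : ∀ C ∈ 𝒞, ∀ g : C ⟶ N, ∃ h : C ⟶ M, h ≫ p = g)
    (PL : CochainComplex A ℤ) (πL : PL.X 0 ⟶ L) (hL : IsLeftRes 𝒞 L PL πL)
    (PN : CochainComplex A ℤ) (πN : PN.X 0 ⟶ N) (hN : IsLeftRes 𝒞 N PN πN) :
    ∃ (Q : CochainComplex A ℤ) (πQ : Q.X 0 ⟶ M)
      (eL : ∀ k : ℤ, PL.X k ⟶ Q.X k) (rL : ∀ k : ℤ, Q.X k ⟶ PL.X k)
      (eN : ∀ k : ℤ, PN.X k ⟶ Q.X k) (rN : ∀ k : ℤ, Q.X k ⟶ PN.X k)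
      (Θ : ∀ a b : ℤ, PN.X a ⟶ PL.X b),
      (∀ k, eL k ≫ rL k = 𝟙 _) ∧ (∀ k, eN k ≫ rN k = 𝟙 _) ∧
      (∀ k, eL k ≫ rN k = 0) ∧ (∀ k, eN k ≫ rL k = 0) ∧
      (∀ k, rL k ≫ eL k + rN k ≫ eN k = 𝟙 (Q.X k)) ∧
      (∀ j : ℤ, 0 < j → IsZero (Q.X j)) ∧
      (∀ a b : ℤ, eL a ≫ Q.d a b = PL.d a b ≫ eL b) ∧
      (∀ a b : ℤ, eN a ≫ Q.d a b = Θ a b ≫ eL b + PN.d a b ≫ eN b) ∧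
      (∀ a b c : ℤ, a + 1 = b → b + 1 = c → Θ a b ≫ PL.d b c = -(PN.d a b ≫ Θ b c)) ∧
      (eL 0 ≫ πQ = πL ≫ i) ∧ ((eN 0 ≫ πQ) ≫ p = πN) ∧
      (Q.d (-1) 0 ≫ πQ = 0) := by
  classical
  obtain ⟨σ, hσ⟩ := hCex (PN.X 0) (hN.2.1 0 le_rfl) πN
  haveI : Mono (ShortComplex.mk i p hw).f := hmono
  have hgp : (-(PN.d (-1) 0 ≫ σ)) ≫ (ShortComplex.mk i p hw).g = 0 := by
    show (-(PN.d (-1) 0 ≫ σ)) ≫ p = 0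
    rw [Preadditive.neg_comp, Category.assoc, hσ, hN.2.2.1, neg_zero]
  set gbar : PN.X (-1) ⟶ L := hex.lift (-(PN.d (-1) 0 ≫ σ)) hgp with hgbardef
  have hgbari : gbar ≫ i = -(PN.d (-1) 0 ≫ σ) := hex.lift_f _ hgp
  obtain ⟨θm1, hθm1⟩ := res_fill0 hL (hN.2.1 (-1) (by omega)) gbar
  set πL' : ∀ j : ℤ, PL.X j ⟶ L :=
    fun j => if h : j = 0 then eqToHom (congrArg PL.X h) ≫ πL else 0 with hπL'
  set gbar' : ∀ k : ℤ, PN.X k ⟶ L :=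
    fun k => if h : k = -1 then eqToHom (congrArg PN.X h) ≫ gbar else 0 with hgbar'
  have hπL'0 : πL' 0 = πL := by
    show (if h : (0:ℤ) = 0 then eqToHom (congrArg PL.X h) ≫ πL else 0) = πL
    rw [dif_pos rfl, show eqToHom (congrArg PL.X (rfl : (0:ℤ) = 0)) = 𝟙 _ from rfl,
      Category.id_comp]
  have hgbar'm1 : gbar' (-1) = gbar := by
    show (if h : (-1:ℤ) = -1 then eqToHom (congrArg PN.X h) ≫ gbar else 0) = gbar
    rw [dif_pos rfl, show eqToHom (congrArg PN.X (rfl : (-1:ℤ) = -1)) = 𝟙 _ from rfl,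
      Category.id_comp]
  set T : ℤ → Type v := fun k => PN.X k ⟶ PL.X (k + 1) with hT
  set R : ∀ k : ℤ, T k → T (k + 1) → Prop := fun k t t' =>
    (t ≫ PL.d (k + 1) (k + 1 + 1) = -(PN.d k (k + 1) ≫ t')) ∧
    (t ≫ πL' (k + 1) = gbar' k) with hR
  have hbase : ∃ t : T (-1), R (-1) t (0 : T 0) := by
    refine ⟨θm1, ?_, ?_⟩
    · show θm1 ≫ PL.d 0 1 = -(PN.d (-1) 0 ≫ (0 : T 0))
      rw [(hL.1 1 one_pos).eq_of_tgt (PL.d 0 1) 0, comp_zero, comp_zero, neg_zero]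
    · show θm1 ≫ πL' 0 = gbar' (-1)
      rw [hπL'0, hgbar'm1]; exact hθm1
  have hstep : ∀ k : ℤ, k < -1 → ∀ (t' : T (k + 1)) (t'' : T (k + 1 + 1)),
      R (k + 1) t' t'' → ∃ t : T k, R k t t' := by
    intro k hk t' t'' hprev
    obtain ⟨h1, h2⟩ := hprev
    have hb2 : ∀ t : T k, t ≫ πL' (k + 1) = gbar' k := by
      intro t
      have e1 : πL' (k + 1) = 0 := dif_neg (by omega)
      have e2 : gbar' k = 0 := dif_neg (by omega)
      rw [e1, e2, comp_zero]
    by_cases hk2 : k = -2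
    · subst hk2
      have ht'πL : t' ≫ πL = gbar := by
        have h2' : t' ≫ πL' 0 = gbar' (-1) := h2
        rwa [hπL'0, hgbar'm1] at h2'
      have ht'i : t' ≫ πL ≫ i = -(PN.d (-1) 0 ≫ σ) := by
        rw [← Category.assoc, ht'πL, hgbari]
      have hdd2 : PN.d (-2) (-2 + 1) ≫ PN.d (-1) 0 = 0 :=
        HomologicalComplex.d_comp_d PN (-2) (-2 + 1) 0
      have hgπ : (-(PN.d (-2) (-2 + 1) ≫ t')) ≫ πL = 0 := by
        have e1 : ((-(PN.d (-2) (-2 + 1) ≫ t')) ≫ πL) ≫ i = 0 := by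
          simp only [Preadditive.neg_comp, Category.assoc, neg_eq_zero]
          rw [ht'i, Preadditive.comp_neg, neg_eq_zero, ← Category.assoc, hdd2, zero_comp]
        exact zero_of_comp_mono i e1
      obtain ⟨h, hh⟩ := res_fill_top hL (hN.2.1 (-2) (by omega)) (-1) (by omega)
        (-(PN.d (-2) (-2 + 1) ≫ t')) hgπ
      exact ⟨h, hh, hb2 h⟩
    · obtain ⟨h, hh⟩ := res_fill_step hL (hN.2.1 k (by omega)) (k + 1) (k + 1 + 1)
        (k + 1 + 1 + 1) rfl rfl (by omega) (-(PN.d k (k + 1) ≫ t'))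
        (by
          rw [Preadditive.neg_comp, Category.assoc, h1, Preadditive.comp_neg, neg_neg,
            ← Category.assoc, HomologicalComplex.d_comp_d, zero_comp])
      exact ⟨h, hh, hb2 h⟩
  set θ := chainRec (fun k => (0 : T k)) (0 : T 0) R with hθdef
  have spec := chainRec_spec (fun k => (0 : T k)) (0 : T 0) R hbase hstep
  set Θ : ∀ a b : ℤ, PN.X a ⟶ PL.X b :=
    fun a b => if h : a + 1 = b then θ a ≫ eqToHom (congrArg PL.X h) else 0 with hΘdef
  have hΘsucc : ∀ a : ℤ, Θ a (a + 1) = θ a := by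
    intro a
    show (if h : a + 1 = a + 1 then θ a ≫ eqToHom (congrArg PL.X h) else 0) = θ a
    rw [dif_pos rfl, show eqToHom (congrArg PL.X (rfl : a + 1 = a + 1)) = 𝟙 _ from rfl,
      Category.comp_id]
  have hΘrel : ∀ a b c : ℤ, a + 1 = b → b + 1 = c →
      Θ a b ≫ PL.d b c = -(PN.d a b ≫ Θ b c) := by
    intro a b c hab hbc
    subst hab; subst hbc
    rw [hΘsucc a, hΘsucc (a + 1)]
    rcases lt_or_ge a 0 with ha | ha
    · exact (spec a ha).1
    · have e1 : θ (a + 1) = 0 := chainRec_pos _ _ _ _ (by omega)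
      have e2 : θ a = 0 := by
        rcases eq_or_lt_of_le ha with h0 | hpos
        · rw [← h0]; exact chainRec_zero _ _ _
        · exact chainRec_pos _ _ _ _ hpos
      rw [e1, e2, zero_comp, comp_zero, neg_zero]
  have hθm1πL : θ (-1) ≫ πL = gbar := by
    have h2' : θ (-1) ≫ πL' 0 = gbar' (-1) := (spec (-1) (by omega)).2
    rwa [hπL'0, hgbar'm1] at h2'
  -- assemble the complex Q
  set dd : ∀ a b : ℤ, (PL.X a ⊞ PN.X a) ⟶ (PL.X b ⊞ PN.X b) := fun a b =>
    biprod.fst ≫ PL.d a b ≫ biprod.inl + biprod.snd ≫ Θ a b ≫ biprod.inl +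
      biprod.snd ≫ PN.d a b ≫ biprod.inr with hdd
  have hddL : ∀ a b : ℤ, biprod.inl ≫ dd a b = PL.d a b ≫ biprod.inl := by
    intro a b; rw [hdd]; simp
  have hddN : ∀ a b : ℤ, biprod.inr ≫ dd a b =
      Θ a b ≫ biprod.inl + PN.d a b ≫ biprod.inr := by
    intro a b; rw [hdd]; simp
  set Q : CochainComplex A ℤ :=
    { X := fun k => PL.X k ⊞ PN.X k
      d := dd
      shape := by
        intro a b hab
        change ¬(a + 1 = b) at hab
        have e : Θ a b = 0 := dif_neg hab
        rw [hdd]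
        simp [PL.shape a b hab, PN.shape a b hab, e]
      d_comp_d' := by
        intro a b c hab hbc
        change a + 1 = b at hab
        change b + 1 = c at hbc
        apply biprod.hom_ext'
        · rw [comp_zero, ← Category.assoc, hddL, Category.assoc, hddL,
            ← Category.assoc, HomologicalComplex.d_comp_d, zero_comp]
        · rw [comp_zero, ← Category.assoc, hddN, Preadditive.add_comp,
            Category.assoc, Category.assoc, hddL, hddN, Preadditive.comp_add,
            ← Category.assoc (PN.d a b), ← Category.assoc (PN.d a b)]
          rw [← Category.assoc (Θ a b), hΘrel a b c hab hbc,
            HomologicalComplex.d_comp_d, zero_comp, Preadditive.neg_comp]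
          abel } with hQ
  set πQ : (Q.X 0) ⟶ M := biprod.desc (πL ≫ i) σ with hπQ
  refine ⟨Q, πQ, fun k => biprod.inl, fun k => biprod.fst, fun k => biprod.inr,
    fun k => biprod.snd, Θ, fun k => biprod.inl_fst, fun k => biprod.inr_snd,
    fun k => biprod.inl_snd, fun k => biprod.inr_fst, fun k => biprod.total,
    fun j hj => isZero_biprod (hL.1 j hj) (hN.1 j hj), hddL, hddN, hΘrel, ?_, ?_, ?_⟩
  · exact biprod.inl_desc _ _
  · rw [hπQ, biprod.inr_desc, hσ]
  · show dd (-1) 0 ≫ πQ = 0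
    rw [hdd, hπQ]
    simp only [Preadditive.add_comp, Category.assoc, biprod.inl_desc, biprod.inr_desc]
    have e1 : Θ (-1) 0 = θ (-1) := hΘsucc (-1)
    have e2 : PL.d (-1) 0 ≫ πL ≫ i = 0 := by
      rw [← Category.assoc, hL.2.2.1, zero_comp]
    have e3 : θ (-1) ≫ πL ≫ i = -(PN.d (-1) 0 ≫ σ) := by
      rw [← Category.assoc, hθm1πL, hgbari]
    rw [e1, e2, e3, comp_zero, zero_add, Preadditive.comp_neg, neg_add_cancel]

/-! ### Helpers for `ExtGrp` -/

lemma exists_d_comp_congr (P : CochainComplex A ℤ) {a b b' : ℤ} (h : b = b') {Z : A}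
    (x : P.X a ⟶ Z) :
    (∃ w : P.X b ⟶ Z, P.d a b ≫ w = x) ↔ (∃ w : P.X b' ⟶ Z, P.d a b' ≫ w = x) := by
  subst h; rfl

lemma mem_extCocycles {P : CochainComplex A ℤ} {Y : A} {n : ℤ} (g : P.X (-n) ⟶ Y) :
    g ∈ extCocycles P Y n ↔ P.d (-n - 1) (-n) ≫ g = 0 := by
  simp [extCocycles, AddMonoidHom.mem_ker]

lemma extgrp_eq_iff {P : CochainComplex A ℤ} {Y : A} {n : ℤ} (x y : extCocycles P Y n) :
    (QuotientAddGroup.mk x : ExtGrp P Y n) = QuotientAddGroup.mk y ↔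
      ∃ w : P.X (-n + 1) ⟶ Y, P.d (-n) (-n + 1) ≫ w = (x : P.X (-n) ⟶ Y) - y := by
  rw [QuotientAddGroup.eq_iff_sub_mem, AddSubgroup.mem_addSubgroupOf]
  show ((x - y : extCocycles P Y n) : P.X (-n) ⟶ Y) ∈ extBoundaries P Y n ↔ _
  rw [extBoundaries]
  simp [AddMonoidHom.mem_range]

lemma extgrp_zero_iff {P : CochainComplex A ℤ} {Y : A} {n : ℤ} (x : extCocycles P Y n) :
    (QuotientAddGroup.mk x : ExtGrp P Y n) = 0 ↔
      ∃ w : P.X (-n + 1) ⟶ Y, P.d (-n) (-n + 1) ≫ w = (x : P.X (-n) ⟶ Y) := by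
  rw [QuotientAddGroup.eq_zero_iff, AddSubgroup.mem_addSubgroupOf]
  show ((x : extCocycles P Y n) : P.X (-n) ⟶ Y) ∈ extBoundaries P Y n ↔ _
  rw [extBoundaries]
  simp [AddMonoidHom.mem_range]

lemma extMap_mk {P P' : CochainComplex A ℤ} (φ : P ⟶ P') (Y : A) (n : ℤ)
    (x : extCocycles P' Y n) :
    extMap φ Y n (QuotientAddGroup.mk x) =
      QuotientAddGroup.mk (extCocyclesMap φ Y n x) := by
  rfl

lemma extCocyclesMap_coe {P P' : CochainComplex A ℤ} (φ : P ⟶ P') (Y : A) (n : ℤ)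
    (x : extCocycles P' Y n) :
    (extCocyclesMap φ Y n x : P.X (-n) ⟶ Y) = φ.f (-n) ≫ (x : P'.X (-n) ⟶ Y) := rfl

set_option maxHeartbeats 1000000 in
/-- a `Hom_𝒜(𝒞,-)`-exact short exact sequence `0 → L → M → N → 0`
induces a long exact sequence of relative Ext groups
`0 → Hom(N,Y) → Hom(M,Y) → Hom(L,Y) → Ext¹_𝒞(N,Y) → Ext¹_𝒞(M,Y) → Ext¹_𝒞(L,Y) → ⋯`,
where the maps between Ext groups are induced by chain maps between left
`𝒞`-resolutions lifting `p` and `i`. -/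
theorem stmt13 (𝒞 : Set A) (hcf : ContravariantlyFinite 𝒞) (hadm : Admissible 𝒞)
    {L M N : A} (i : L ⟶ M) (p : M ⟶ N) (hw : i ≫ p = 0)
    (hmono : Mono i) (hepi : Epi p) (hex : (ShortComplex.mk i p hw).Exact)
    (hCex : ∀ C ∈ 𝒞, ∀ g : C ⟶ N, ∃ h : C ⟶ M, h ≫ p = g)
    (PL : CochainComplex A ℤ) (πL : PL.X 0 ⟶ L) (hL : IsLeftRes 𝒞 L PL πL)
    (PM : CochainComplex A ℤ) (πM : PM.X 0 ⟶ M) (hM : IsLeftRes 𝒞 M PM πM)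
    (PN : CochainComplex A ℤ) (πN : PN.X 0 ⟶ N) (hN : IsLeftRes 𝒞 N PN πN)
    (Y : A) :
    ∃ (φ : PM ⟶ PN) (ψ : PL ⟶ PM),
      φ.f 0 ≫ πN = πM ≫ p ∧ ψ.f 0 ≫ πM = πL ≫ i ∧
      ∃ (δ0 : (L ⟶ Y) →+ ExtGrp PN Y 1)
        (δ : ∀ n : ℤ, 1 ≤ n → (ExtGrp PL Y n →+ ExtGrp PN Y (n + 1))),
        Function.Injective (fun g : N ⟶ Y => p ≫ g) ∧
        Function.Exact (fun g : N ⟶ Y => p ≫ g) (fun h : M ⟶ Y => i ≫ h) ∧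
        Function.Exact (fun h : M ⟶ Y => i ≫ h) ⇑δ0 ∧
        Function.Exact ⇑δ0 ⇑(extMap φ Y 1) ∧
        (∀ n : ℤ, 1 ≤ n → Function.Exact ⇑(extMap φ Y n) ⇑(extMap ψ Y n)) ∧
        (∀ (n : ℤ) (hn : 1 ≤ n), Function.Exact ⇑(extMap ψ Y n) ⇑(δ n hn)) ∧
        (∀ (n : ℤ) (hn : 1 ≤ n), Function.Exact ⇑(δ n hn) ⇑(extMap φ Y (n + 1))) := by
  classical
  haveI : Mono (ShortComplex.mk i p hw).f := hmono
  haveI : Epi (ShortComplex.mk i p hw).g := hepi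
  have hπLepi : Epi πL := res_pi_epi hadm hL
  have hπNepi : Epi πN := res_pi_epi hadm hN
  haveI := hπLepi; haveI := hπNepi
  obtain ⟨Q, πQ, eL, rL, eN, rN, Θ, heLrL, heNrN, heLrN, heNrL, htot, hQz, hdL, hdN,
    hΘrel, hπQL, hπQN, hdπQ⟩ := exists_Q 𝒞 i p hw hmono hex hCex PL πL hL PN πN hN
  set σ' : PN.X 0 ⟶ M := eN 0 ≫ πQ with hσ'def
  have hσp : σ' ≫ p = πN := hπQN
  -- extensionality and decomposition for Q
  have hQext : ∀ (k : ℤ) {Z : A} (f g : Q.X k ⟶ Z),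
      eL k ≫ f = eL k ≫ g → eN k ≫ f = eN k ≫ g → f = g := by
    intro k Z f g h1 h2
    rw [← Category.id_comp f, ← Category.id_comp g, ← htot k, Preadditive.add_comp,
      Preadditive.add_comp, Category.assoc, Category.assoc, Category.assoc, Category.assoc,
      h1, h2]
  have hdec : ∀ (k : ℤ) {C : A} (g : C ⟶ Q.X k),
      (g ≫ rL k) ≫ eL k + (g ≫ rN k) ≫ eN k = g := by
    intro k C g
    rw [Category.assoc, Category.assoc, ← Preadditive.comp_add, htot k, Category.comp_id]
  have hQdrN : ∀ a b : ℤ, Q.d a b ≫ rN b = rN a ≫ PN.d a b := by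
    intro a b
    apply hQext a
    · rw [← Category.assoc, ← Category.assoc, hdL a b, Category.assoc, heLrN, comp_zero,
        heLrN, zero_comp]
    · rw [← Category.assoc, ← Category.assoc, hdN a b, Preadditive.add_comp,
        Category.assoc, Category.assoc, heLrN, heNrN, comp_zero, zero_add,
        Category.comp_id, heNrN, Category.id_comp]
  have hQdrL : ∀ a b : ℤ, Q.d a b ≫ rL b = rL a ≫ PL.d a b + rN a ≫ Θ a b := by
    intro a b
    apply hQext a
    · rw [← Category.assoc, hdL a b, Category.assoc, heLrL, Category.comp_id,
        Preadditive.comp_add, ← Category.assoc, ← Category.assoc, heLrL, heLrN,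
        Category.id_comp, zero_comp, add_zero]
    · rw [← Category.assoc, hdN a b, Preadditive.add_comp, Category.assoc, Category.assoc,
        heLrL, heNrL, Category.comp_id, comp_zero, add_zero, Preadditive.comp_add,
        ← Category.assoc, ← Category.assoc, heNrL, heNrN, zero_comp, zero_add,
        Category.id_comp]
  have hΘπ : Θ (-1) 0 ≫ (πL ≫ i) = -(PN.d (-1) 0 ≫ σ') := by
    have h0 : eN (-1) ≫ Q.d (-1) 0 ≫ πQ = 0 := by rw [hdπQ, comp_zero]
    rw [← Category.assoc, hdN (-1) 0, Preadditive.add_comp, Category.assoc, Category.assoc,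
      hπQL] at h0
    exact eq_neg_of_add_eq_zero_left h0
  -- fillers for Q
  have Qfill0 : ∀ {C : A}, C ∈ 𝒞 → ∀ g : C ⟶ M, ∃ h : C ⟶ Q.X 0, h ≫ πQ = g := by
    intro C hC g
    obtain ⟨gN, hgN⟩ := res_fill0 hN hC (g ≫ p)
    have hmker : (g - gN ≫ σ') ≫ (ShortComplex.mk i p hw).g = 0 := by
      show (g - gN ≫ σ') ≫ p = 0
      rw [Preadditive.sub_comp, Category.assoc, hσp, hgN, sub_self]
    obtain ⟨gL, hgL⟩ := res_fill0 hL hC (hex.lift _ hmker)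
    refine ⟨gL ≫ eL 0 + gN ≫ eN 0, ?_⟩
    rw [Preadditive.add_comp, Category.assoc, Category.assoc, hπQL, ← Category.assoc gL,
      hgL, hex.lift_f _ hmker]
    abel
  have Qfill_top : ∀ {C : A}, C ∈ 𝒞 → ∀ g : C ⟶ Q.X 0, g ≫ πQ = 0 →
      ∃ h : C ⟶ Q.X (-1), h ≫ Q.d (-1) 0 = g := by
    intro C hC g hg
    have hgsum : (g ≫ rL 0) ≫ eL 0 + (g ≫ rN 0) ≫ eN 0 = g := hdec 0 g
    have h0 : g ≫ rL 0 ≫ πL ≫ i + g ≫ rN 0 ≫ σ' = 0 := by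
      have e : ((g ≫ rL 0) ≫ eL 0 + (g ≫ rN 0) ≫ eN 0) ≫ πQ = 0 := by rw [hgsum, hg]
      simp only [Preadditive.add_comp, Category.assoc] at e
      rw [hπQL] at e
      exact e
    have hgNπN : (g ≫ rN 0) ≫ πN = 0 := by
      have e : (g ≫ rL 0 ≫ πL ≫ i + g ≫ rN 0 ≫ σ') ≫ p = 0 := by rw [h0, zero_comp]
      simp only [Preadditive.add_comp, Category.assoc] at e
      rw [hw, hσp] at e
      simp only [comp_zero, zero_add] at e
      rw [Category.assoc]
      exact e
    obtain ⟨hNl, hhN⟩ := res_fill_top hN hC (-1) (by omega) (g ≫ rN 0) hgNπN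
    have hgLi : g ≫ rL 0 ≫ πL ≫ i = -(g ≫ rN 0 ≫ σ') := eq_neg_of_add_eq_zero_left h0
    have hΘi : hNl ≫ Θ (-1) 0 ≫ πL ≫ i = -(g ≫ rN 0 ≫ σ') := by
      rw [hΘπ, Preadditive.comp_neg, ← Category.assoc, hhN, Category.assoc]
    have hπL0 : (g ≫ rL 0 - hNl ≫ Θ (-1) 0) ≫ πL = 0 := by
      apply zero_of_comp_mono i
      simp only [Preadditive.sub_comp, Category.assoc]
      rw [hgLi, hΘi, sub_self]
    obtain ⟨hLl, hhL⟩ := res_fill_top hL hC (-1) (by omega) _ hπL0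
    refine ⟨hLl ≫ eL (-1) + hNl ≫ eN (-1), ?_⟩
    simp only [Preadditive.add_comp, Category.assoc]
    rw [hdL (-1) 0, hdN (-1) 0, Preadditive.comp_add, ← Category.assoc hLl, hhL,
      ← Category.assoc hNl (Θ (-1) 0), ← Category.assoc hNl (PN.d (-1) 0), hhN,
      Preadditive.sub_comp]
    conv_rhs => rw [← hgsum]
    abel
  have Qfill_step : ∀ {C : A}, C ∈ 𝒞 → ∀ a b c : ℤ, a + 1 = b → b + 1 = c → b < 0 →
      ∀ g : C ⟶ Q.X b, g ≫ Q.d b c = 0 → ∃ h : C ⟶ Q.X a, h ≫ Q.d a b = g := by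
    intro C hC a b c hab hbc hb g hg
    have hgsum : (g ≫ rL b) ≫ eL b + (g ≫ rN b) ≫ eN b = g := hdec b g
    have hgN : (g ≫ rN b) ≫ PN.d b c = 0 := by
      rw [Category.assoc, ← hQdrN b c, ← Category.assoc, hg, zero_comp]
    have hgLrel : (g ≫ rL b) ≫ PL.d b c + (g ≫ rN b) ≫ Θ b c = 0 := by
      have e : g ≫ Q.d b c ≫ rL c = 0 := by rw [← Category.assoc, hg, zero_comp]
      rw [hQdrL b c, Preadditive.comp_add, ← Category.assoc, ← Category.assoc] at e
      exact e
    obtain ⟨hNl, hhN⟩ := res_fill_step hN hC a b c hab hbc hb _ hgN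
    have hcoc : ((g ≫ rL b) - hNl ≫ Θ a b) ≫ PL.d b c = 0 := by
      simp only [Preadditive.sub_comp, Category.assoc]
      rw [hΘrel a b c hab hbc, Preadditive.comp_neg, sub_neg_eq_add,
        ← Category.assoc hNl, hhN, ← Category.assoc g (rL b)]
      exact hgLrel
    obtain ⟨hLl, hhL⟩ := res_fill_step hL hC a b c hab hbc hb _ hcoc
    refine ⟨hLl ≫ eL a + hNl ≫ eN a, ?_⟩
    simp only [Preadditive.add_comp, Category.assoc]
    rw [hdL a b, hdN a b, Preadditive.comp_add, ← Category.assoc hLl, hhL,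
      ← Category.assoc hNl (Θ a b), ← Category.assoc hNl (PN.d a b), hhN,
      Preadditive.sub_comp]
    conv_rhs => rw [← hgsum]
    abel
  -- epiness of πQ and factorization through cokernels
  have hπQepi : Epi πQ := by
    apply Preadditive.epi_of_cancel_zero
    intro R t ht
    have h1 : i ≫ t = 0 := by
      have e : πL ≫ i ≫ t = πL ≫ 0 := by
        rw [comp_zero, ← Category.assoc, ← hπQL, Category.assoc, ht, comp_zero]
      exact (cancel_epi πL).mp (by rw [comp_zero] at e ⊢; exact e)
    have h1' : (ShortComplex.mk i p hw).f ≫ t = 0 := h1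
    have h2 : πN ≫ hex.desc t h1' = 0 := by
      rw [← hσp, Category.assoc, hex.g_desc t h1', hσ'def, Category.assoc, ht, comp_zero]
    have h3 : hex.desc t h1' = 0 := zero_of_epi_comp πN h2
    rw [← hex.g_desc t h1', h3, comp_zero]
  haveI := hπQepi
  have hfactorQ : ∀ {R : A} (t : Q.X 0 ⟶ R), Q.d (-1) 0 ≫ t = 0 →
      ∃ s : M ⟶ R, πQ ≫ s = t := by
    intro R t ht
    obtain ⟨C, aK, happ⟩ := hcf (kernel πQ)
    haveI : Epi aK := hadm aK happ
    obtain ⟨hK, hhK⟩ := Qfill_top happ.1 (aK ≫ kernel.ι πQ)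
      (by rw [Category.assoc, kernel.condition, comp_zero])
    have hι : kernel.ι πQ ≫ t = 0 := by
      apply zero_of_epi_comp aK
      rw [← Category.assoc, ← hhK, Category.assoc, ht, comp_zero]
    exact ⟨Abelian.epiDesc πQ t hι, Abelian.comp_epiDesc πQ t hι⟩
  have hfactorL : ∀ {R : A} (t : PL.X 0 ⟶ R), PL.d (-1) 0 ≫ t = 0 →
      ∃ s : L ⟶ R, πL ≫ s = t := by
    intro R t ht
    obtain ⟨C, aK, happ⟩ := hcf (kernel πL)
    haveI : Epi aK := hadm aK happ
    obtain ⟨hK, hhK⟩ := res_fill_top hL happ.1 (-1) (by omega) (aK ≫ kernel.ι πL)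
      (by rw [Category.assoc, kernel.condition, comp_zero])
    have hι : kernel.ι πL ≫ t = 0 := by
      apply zero_of_epi_comp aK
      rw [← Category.assoc, ← hhK, Category.assoc, ht, comp_zero]
    exact ⟨Abelian.epiDesc πL t hι, Abelian.comp_epiDesc πL t hι⟩
  -- comparison chain maps u : PM ⟶ Q and v : Q ⟶ PM
  obtain ⟨u, hu0⟩ := exists_chainMap PM Q πM πQ (𝟙 M) hM.1 (hQz 1 one_pos) hM.2.2.1
    (by
      obtain ⟨h, hh⟩ := Qfill0 (hM.2.1 0 le_rfl) πM
      exact ⟨h, by rw [hh, Category.comp_id]⟩)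
    (fun g hg => Qfill_top (hM.2.1 (-1) (by omega)) g hg)
    (fun a b c hab hbc hb g hg => Qfill_step (hM.2.1 a (by omega)) a b c hab hbc hb g hg)
  rw [Category.comp_id] at hu0
  obtain ⟨v, hv0⟩ := exists_chainMap Q PM πQ πM (𝟙 M) hQz (hM.1 1 one_pos) hdπQ
    (by
      obtain ⟨hl, hhl⟩ := res_fill0 hM (hL.2.1 0 le_rfl) (πL ≫ i)
      obtain ⟨hn, hhn⟩ := res_fill0 hM (hN.2.1 0 le_rfl) σ'
      refine ⟨rL 0 ≫ hl + rN 0 ≫ hn, ?_⟩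
      rw [Category.comp_id, Preadditive.add_comp, Category.assoc, Category.assoc, hhl, hhn]
      apply hQext 0
      · simp only [Preadditive.comp_add, ← Category.assoc, heLrL, heLrN, Category.id_comp,
          zero_comp, add_zero, hπQL]
      · simp only [Preadditive.comp_add, ← Category.assoc, heNrL, heNrN, Category.id_comp,
          zero_comp, zero_add]
        exact hσ'def)
    (by
      intro g hg
      obtain ⟨hl, hhl⟩ := res_fill_top hM (hL.2.1 (-1) (by omega)) (-1) (by omega)
        (eL (-1) ≫ g) (by rw [Category.assoc, hg, comp_zero])
      obtain ⟨hn, hhn⟩ := res_fill_top hM (hN.2.1 (-1) (by omega)) (-1) (by omega)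
        (eN (-1) ≫ g) (by rw [Category.assoc, hg, comp_zero])
      refine ⟨rL (-1) ≫ hl + rN (-1) ≫ hn, ?_⟩
      rw [Preadditive.add_comp, Category.assoc, Category.assoc, hhl, hhn,
        ← Category.assoc, ← Category.assoc, ← Preadditive.add_comp, htot (-1),
        Category.id_comp])
    (by
      intro a b c hab hbc hb g hg
      obtain ⟨hl, hhl⟩ := res_fill_step hM (hL.2.1 a (by omega)) a b c hab hbc hb
        (eL a ≫ g) (by rw [Category.assoc, hg, comp_zero])
      obtain ⟨hn, hhn⟩ := res_fill_step hM (hN.2.1 a (by omega)) a b c hab hbc hb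
        (eN a ≫ g) (by rw [Category.assoc, hg, comp_zero])
      refine ⟨rL a ≫ hl + rN a ≫ hn, ?_⟩
      rw [Preadditive.add_comp, Category.assoc, Category.assoc, hhl, hhn,
        ← Category.assoc, ← Category.assoc, ← Preadditive.add_comp, htot a,
        Category.id_comp])
  rw [Category.comp_id] at hv0
  -- homotopies
  obtain ⟨κ, hκ⟩ := exists_homotopy PM PM πM hM.1 (u ≫ v) (𝟙 PM)
    (by
      rw [HomologicalComplex.comp_f, HomologicalComplex.id_f, Category.id_comp,
        Category.assoc, hv0, hu0])
    (fun g hg => res_fill_top hM (hM.2.1 0 le_rfl) (-1) (by omega) g hg)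
    (fun a b c hab hbc hb g hg => res_fill_step hM (hM.2.1 b (by omega)) a b c hab hbc hb g hg)
  obtain ⟨η, hη⟩ := exists_homotopy Q Q πQ hQz (v ≫ u) (𝟙 Q)
    (by
      rw [HomologicalComplex.comp_f, HomologicalComplex.id_f, Category.id_comp,
        Category.assoc, hu0, hv0])
    (by
      intro g hg
      obtain ⟨hl, hhl⟩ := Qfill_top (hL.2.1 0 le_rfl) (eL 0 ≫ g)
        (by rw [Category.assoc, hg, comp_zero])
      obtain ⟨hn, hhn⟩ := Qfill_top (hN.2.1 0 le_rfl) (eN 0 ≫ g)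
        (by rw [Category.assoc, hg, comp_zero])
      refine ⟨rL 0 ≫ hl + rN 0 ≫ hn, ?_⟩
      rw [Preadditive.add_comp, Category.assoc, Category.assoc, hhl, hhn,
        ← Category.assoc, ← Category.assoc, ← Preadditive.add_comp, htot 0,
        Category.id_comp])
    (by
      intro a b c hab hbc hb g hg
      obtain ⟨hl, hhl⟩ := Qfill_step (hL.2.1 b (by omega)) a b c hab hbc hb (eL b ≫ g)
        (by rw [Category.assoc, hg, comp_zero])
      obtain ⟨hn, hhn⟩ := Qfill_step (hN.2.1 b (by omega)) a b c hab hbc hb (eN b ≫ g)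
        (by rw [Category.assoc, hg, comp_zero])
      refine ⟨rL b ≫ hl + rN b ≫ hn, ?_⟩
      rw [Preadditive.add_comp, Category.assoc, Category.assoc, hhl, hhn,
        ← Category.assoc, ← Category.assoc, ← Preadditive.add_comp, htot b,
        Category.id_comp])
  -- the chain maps α : PL ⟶ Q and β : Q ⟶ PN
  set alphaQ : PL ⟶ Q :=
    { f := eL
      comm' := fun a b _ => hdL a b } with halphaQ
  set betaQ : Q ⟶ PN :=
    { f := rN
      comm' := fun a b _ => (hQdrN a b).symm } with hbetaQ
  set φ : PM ⟶ PN := u ≫ betaQ with hφdef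
  set ψ : PL ⟶ PM := alphaQ ≫ v with hψdef
  have hφf : ∀ k : ℤ, φ.f k = u.f k ≫ rN k := fun k => rfl
  have hψf : ∀ k : ℤ, ψ.f k = eL k ≫ v.f k := fun k => rfl
  have hπQp : πQ ≫ p = rN 0 ≫ πN := by
    apply hQext 0
    · rw [← Category.assoc, hπQL, Category.assoc, hw, comp_zero, ← Category.assoc,
        heLrN, zero_comp]
    · rw [← Category.assoc, ← Category.assoc, heNrN, Category.id_comp]
      exact hπQN
  have hφ0 : φ.f 0 ≫ πN = πM ≫ p := by
    rw [hφf 0, Category.assoc, ← hπQp, ← Category.assoc, hu0]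
  have hψ0 : ψ.f 0 ≫ πM = πL ≫ i := by
    rw [hψf 0, Category.assoc, hv0, hπQL]
  -- the connecting homomorphisms
  have hδ0mem : ∀ g : L ⟶ Y, (Θ (-1) 0 ≫ (πL ≫ g)) ∈ extCocycles PN Y 1 := by
    intro g
    rw [mem_extCocycles]
    have h1 := hΘrel (-1 - 1) (-1) 0 (by omega) (by omega)
    have h2 : PN.d (-1 - 1) (-1) ≫ Θ (-1) 0 = -(Θ (-1 - 1) (-1) ≫ PL.d (-1) 0) := by
      rw [h1, neg_neg]
    rw [← Category.assoc, h2, Preadditive.neg_comp, neg_eq_zero, Category.assoc,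
      ← Category.assoc (PL.d (-1) 0), hL.2.2.1, zero_comp, comp_zero]
  set δ0 : (L ⟶ Y) →+ ExtGrp PN Y 1 := AddMonoidHom.mk'
    (fun g => (QuotientAddGroup.mk ⟨Θ (-1) 0 ≫ (πL ≫ g), hδ0mem g⟩ : ExtGrp PN Y 1))
    (by
      intro a b
      refine Eq.trans (congrArg QuotientAddGroup.mk (Subtype.ext ?_))
        (QuotientAddGroup.mk_add _ _ _)
      show Θ (-1) 0 ≫ (πL ≫ (a + b)) =
        Θ (-1) 0 ≫ (πL ≫ a) + Θ (-1) 0 ≫ (πL ≫ b)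
      rw [Preadditive.comp_add, Preadditive.comp_add]) with hδ0def
  have hδmem : ∀ (n : ℤ) (g : extCocycles PL Y n),
      (Θ (-(n + 1)) (-n) ≫ (g : PL.X (-n) ⟶ Y)) ∈ extCocycles PN Y (n + 1) := by
    intro n g
    rw [mem_extCocycles]
    have h1 := hΘrel (-(n + 1) - 1) (-(n + 1)) (-n) (by ring) (by ring)
    have h2 : PN.d (-(n + 1) - 1) (-(n + 1)) ≫ Θ (-(n + 1)) (-n) =
        -(Θ (-(n + 1) - 1) (-(n + 1)) ≫ PL.d (-(n + 1)) (-n)) := by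
      rw [h1, neg_neg]
    have h3 : PL.d (-(n + 1)) (-n) ≫ (g : PL.X (-n) ⟶ Y) = 0 := by
      rw [show (-(n + 1) : ℤ) = -n - 1 by ring]
      exact (mem_extCocycles _).1 g.2
    rw [← Category.assoc, h2, Preadditive.neg_comp, neg_eq_zero, Category.assoc, h3,
      comp_zero]
  set δc : ∀ n : ℤ, extCocycles PL Y n →+ extCocycles PN Y (n + 1) := fun n =>
    AddMonoidHom.mk' (fun g => ⟨Θ (-(n + 1)) (-n) ≫ (g : PL.X (-n) ⟶ Y), hδmem n g⟩)
      (by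
        intro a b
        apply Subtype.ext
        show Θ (-(n + 1)) (-n) ≫ ((a : PL.X (-n) ⟶ Y) + (b : PL.X (-n) ⟶ Y)) =
          Θ (-(n + 1)) (-n) ≫ (a : PL.X (-n) ⟶ Y) + Θ (-(n + 1)) (-n) ≫ (b : PL.X (-n) ⟶ Y)
        rw [Preadditive.comp_add]) with hδcdef
  set δf : ∀ n : ℤ, ExtGrp PL Y n →+ ExtGrp PN Y (n + 1) := fun n =>
    QuotientAddGroup.lift _ ((QuotientAddGroup.mk' _).comp (δc n)) (by
      intro x hx
      rw [AddSubgroup.mem_addSubgroupOf, extBoundaries, AddMonoidHom.mem_range] at hx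
      obtain ⟨h, hh⟩ := hx
      rw [preComp_apply] at hh
      show (QuotientAddGroup.mk (δc n x) : ExtGrp PN Y (n + 1)) = 0
      rw [extgrp_zero_iff, exists_d_comp_congr PN (show (-(n + 1) : ℤ) + 1 = -n by ring)]
      refine ⟨-(Θ (-n) (-n + 1) ≫ h), ?_⟩
      show PN.d (-(n + 1)) (-n) ≫ (-(Θ (-n) (-n + 1) ≫ h)) =
        Θ (-(n + 1)) (-n) ≫ (x : PL.X (-n) ⟶ Y)
      rw [← hh, Preadditive.comp_neg, ← Category.assoc (Θ (-(n + 1)) (-n)),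
        hΘrel (-(n + 1)) (-n) (-n + 1) (by ring) rfl]
      simp only [Preadditive.neg_comp, Category.assoc]) with hδfdef
  have hδfmk : ∀ (n : ℤ) (x : extCocycles PL Y n),
      δf n (QuotientAddGroup.mk x) = QuotientAddGroup.mk (δc n x) := fun n x => rfl
  -- component-evaluation helpers
  have hcompL : ∀ (k : ℤ) {Z : A} (x : PL.X k ⟶ Z) (y : PN.X k ⟶ Z),
      eL k ≫ (rL k ≫ x + rN k ≫ y) = x := by
    intro k Z x y
    rw [Preadditive.comp_add, ← Category.assoc, ← Category.assoc, heLrL, heLrN,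
      Category.id_comp, zero_comp, add_zero]
  have hcompN : ∀ (k : ℤ) {Z : A} (x : PL.X k ⟶ Z) (y : PN.X k ⟶ Z),
      eN k ≫ (rL k ≫ x + rN k ≫ y) = y := by
    intro k Z x y
    rw [Preadditive.comp_add, ← Category.assoc, ← Category.assoc, heNrL, heNrN,
      Category.id_comp, zero_comp, zero_add]
  refine ⟨φ, ψ, hφ0, hψ0, δ0, fun n _ => δf n, ?_, ?_, ?_, ?_, ?_, ?_, ?_⟩
  · -- injectivity of p ≫ -
    intro a b h
    exact (cancel_epi p).mp h
  · -- exactness at Hom(M, Y)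
    intro h
    constructor
    · intro h0
      have h0' : (ShortComplex.mk i p hw).f ≫ h = 0 := h0
      exact ⟨hex.desc h h0', hex.g_desc h h0'⟩
    · rintro ⟨g, rfl⟩
      show i ≫ p ≫ g = 0
      rw [← Category.assoc, hw, zero_comp]
  · -- exactness at Hom(L, Y)
    intro g
    constructor
    · intro h0
      have h0' : (QuotientAddGroup.mk ⟨Θ (-1) 0 ≫ (πL ≫ g), hδ0mem g⟩ :
          ExtGrp PN Y 1) = 0 := h0
      rw [extgrp_zero_iff, exists_d_comp_congr PN (show (-1 : ℤ) + 1 = 0 by omega)] at h0'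
      obtain ⟨w, hwPN⟩ := h0'
      set z : Q.X 0 ⟶ Y := rL 0 ≫ (πL ≫ g) + rN 0 ≫ (-w) with hz
      have e1 : eL 0 ≫ z = πL ≫ g := hcompL 0 _ _
      have e2 : eN 0 ≫ z = -w := hcompN 0 _ _
      have hzd : Q.d (-1) 0 ≫ z = 0 := by
        apply hQext (-1)
        · rw [comp_zero, ← Category.assoc, hdL (-1) 0, Category.assoc, e1,
            ← Category.assoc, hL.2.2.1, zero_comp]
        · rw [comp_zero, ← Category.assoc, hdN (-1) 0, Preadditive.add_comp,
            Category.assoc, Category.assoc, e1, e2, Preadditive.comp_neg, hwPN,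
            add_neg_cancel]
      obtain ⟨s, hs⟩ := hfactorQ z hzd
      refine ⟨s, ?_⟩
      show i ≫ s = g
      apply (cancel_epi πL).mp
      rw [← Category.assoc, ← hπQL, Category.assoc, hs, e1]
    · rintro ⟨h, rfl⟩
      show (QuotientAddGroup.mk ⟨Θ (-1) 0 ≫ (πL ≫ (i ≫ h)), hδ0mem _⟩ :
          ExtGrp PN Y 1) = 0
      rw [extgrp_zero_iff, exists_d_comp_congr PN (show (-1 : ℤ) + 1 = 0 by omega)]
      refine ⟨-(σ' ≫ h), ?_⟩
      show PN.d (-1) 0 ≫ (-(σ' ≫ h)) = Θ (-1) 0 ≫ (πL ≫ (i ≫ h))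
      have e : Θ (-1) 0 ≫ (πL ≫ i ≫ h) = (Θ (-1) 0 ≫ (πL ≫ i)) ≫ h := by
        simp only [Category.assoc]
      rw [Preadditive.comp_neg, e, hΘπ, Preadditive.neg_comp, Category.assoc]
      simp only [hσ'def, Preadditive.neg_comp, Category.assoc]
  · -- exactness at Ext¹(N, Y)
    intro y
    refine QuotientAddGroup.induction_on y ?_
    intro x
    constructor
    · intro h0
      have h0' : (QuotientAddGroup.mk (extCocyclesMap φ Y 1 x) : ExtGrp PM Y 1) = 0 := h0
      rw [extgrp_zero_iff, exists_d_comp_congr PM (show (-1 : ℤ) + 1 = 0 by omega)] at h0'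
      obtain ⟨w, hwv⟩ := h0'
      rw [extCocyclesMap_coe, hφf (-1), Category.assoc] at hwv
      -- hwv : PM.d (-1) 0 ≫ w = u.f (-1) ≫ (rN (-1) ≫ x.1)
      set sN : Q.X (-1) ⟶ Y := rN (-1) ≫ (x : PN.X (-1) ⟶ Y) with hsN
      have hcoc : Q.d (-1 - 1) (-1) ≫ sN = 0 := by
        rw [hsN, ← Category.assoc, hQdrN (-1 - 1) (-1), Category.assoc,
          (mem_extCocycles _).1 x.2, comp_zero]
      have hη1 := hη (-1 - 1) (-1) 0 (by omega) (by omega)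
      have e3 : (v ≫ u).f (-1) ≫ sN - sN = Q.d (-1) 0 ≫ η 0 (-1) ≫ sN := by
        have e := congrArg (fun t => t ≫ sN) hη1
        simp only [Preadditive.sub_comp, Preadditive.add_comp, Category.assoc,
          HomologicalComplex.id_f, Category.id_comp] at e
        rw [hcoc, comp_zero, add_zero] at e
        exact e
      have e1 : (v ≫ u).f (-1) ≫ sN = Q.d (-1) 0 ≫ v.f 0 ≫ w := by
        rw [HomologicalComplex.comp_f, Category.assoc, hsN, ← hwv, ← Category.assoc,
          ← Category.assoc, v.comm (-1) 0, Category.assoc]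
      have hkey : sN = Q.d (-1) 0 ≫ (v.f 0 ≫ w - η 0 (-1) ≫ sN) := by
        rw [Preadditive.comp_sub, ← e1, ← e3]
        abel
      set W : Q.X 0 ⟶ Y := v.f 0 ≫ w - η 0 (-1) ≫ sN with hWdef
      have hWL : PL.d (-1) 0 ≫ (eL 0 ≫ W) = 0 := by
        rw [← Category.assoc, ← hdL (-1) 0, Category.assoc, ← hkey, hsN,
          ← Category.assoc, heLrN, zero_comp]
      obtain ⟨g', hg'⟩ := hfactorL _ hWL
      refine ⟨g', ?_⟩
      show (QuotientAddGroup.mk ⟨Θ (-1) 0 ≫ (πL ≫ g'), hδ0mem g'⟩ : ExtGrp PN Y 1) =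
        QuotientAddGroup.mk x
      rw [extgrp_eq_iff, exists_d_comp_congr PN (show (-1 : ℤ) + 1 = 0 by omega)]
      refine ⟨-(eN 0 ≫ W), ?_⟩
      have e4 : eN (-1) ≫ sN = (x : PN.X (-1) ⟶ Y) := by
        rw [hsN, ← Category.assoc, heNrN, Category.id_comp]
      have hx1 : (x : PN.X (-1) ⟶ Y) =
          Θ (-1) 0 ≫ (eL 0 ≫ W) + PN.d (-1) 0 ≫ (eN 0 ≫ W) := by
        rw [← e4, hkey, ← Category.assoc, hdN (-1) 0, Preadditive.add_comp,
          Category.assoc, Category.assoc]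
      show PN.d (-1) 0 ≫ (-(eN 0 ≫ W)) =
        Θ (-1) 0 ≫ (πL ≫ g') - (x : PN.X (-1) ⟶ Y)
      rw [hg', hx1, Preadditive.comp_neg]
      abel
    · rintro ⟨g, hg⟩
      rw [← hg]
      show (QuotientAddGroup.mk
        (extCocyclesMap φ Y 1 ⟨Θ (-1) 0 ≫ (πL ≫ g), hδ0mem g⟩) : ExtGrp PM Y 1) = 0
      rw [extgrp_zero_iff, exists_d_comp_congr PM (show (-1 : ℤ) + 1 = 0 by omega)]
      refine ⟨u.f 0 ≫ (rL 0 ≫ (πL ≫ g)), ?_⟩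
      rw [extCocyclesMap_coe, hφf (-1)]
      have eQ : Q.d (-1) 0 ≫ (rL 0 ≫ (πL ≫ g)) = rN (-1) ≫ (Θ (-1) 0 ≫ (πL ≫ g)) := by
        rw [← Category.assoc, hQdrL (-1) 0]
        simp only [Preadditive.add_comp, Category.assoc]
        rw [← Category.assoc (PL.d (-1) 0), hL.2.2.1, zero_comp, comp_zero, zero_add]
      rw [← Category.assoc (PM.d (-1) 0), ← u.comm (-1) 0, Category.assoc, eQ,
        Category.assoc, ← Category.assoc (u.f (-1))]
  · -- exactness at Extⁿ(M, Y)
    intro n hn y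
    refine QuotientAddGroup.induction_on y ?_
    intro m
    constructor
    · intro h0
      have h0' : (QuotientAddGroup.mk (extCocyclesMap ψ Y n m) : ExtGrp PL Y n) = 0 := h0
      rw [extgrp_zero_iff] at h0'
      obtain ⟨h, hh⟩ := h0'
      rw [extCocyclesMap_coe, hψf (-n), Category.assoc] at hh
      set z : Q.X (-n) ⟶ Y := v.f (-n) ≫ (m : PM.X (-n) ⟶ Y) with hzdef
      have hzcoc : Q.d (-n - 1) (-n) ≫ z = 0 := by
        rw [hzdef, ← Category.assoc, ← v.comm (-n - 1) (-n), Category.assoc,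
          (mem_extCocycles _).1 m.2, comp_zero]
      set W : Q.X (-n + 1) ⟶ Y := rL (-n + 1) ≫ h with hWdef
      set z' : Q.X (-n) ⟶ Y := z - Q.d (-n) (-n + 1) ≫ W with hz'def
      have hz'L : eL (-n) ≫ z' = 0 := by
        rw [hz'def, Preadditive.comp_sub, ← hh, ← Category.assoc, hdL (-n) (-n + 1),
          Category.assoc, hWdef, ← Category.assoc (eL (-n + 1)), heLrL,
          Category.id_comp, sub_self]
      have hz'coc : Q.d (-n - 1) (-n) ≫ z' = 0 := by
        rw [hz'def, Preadditive.comp_sub, hzcoc, ← Category.assoc,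
          HomologicalComplex.d_comp_d, zero_comp, sub_zero]
      set y' : PN.X (-n) ⟶ Y := eN (-n) ≫ z' with hy'def
      have hz'ry : rN (-n) ≫ y' = z' := by
        apply hQext (-n)
        · rw [← Category.assoc, heLrN, zero_comp, hz'L]
        · rw [← Category.assoc, heNrN, Category.id_comp]
      have hy'coc : PN.d (-n - 1) (-n) ≫ y' = 0 := by
        have e : eN (-n - 1) ≫ Q.d (-n - 1) (-n) ≫ z' = 0 := by rw [hz'coc, comp_zero]
        rw [← Category.assoc, hdN (-n - 1) (-n), Preadditive.add_comp, Category.assoc,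
          Category.assoc, hz'L, comp_zero, zero_add] at e
        exact e
      refine ⟨QuotientAddGroup.mk ⟨y', (mem_extCocycles _).2 hy'coc⟩, ?_⟩
      show (QuotientAddGroup.mk (extCocyclesMap φ Y n ⟨y', (mem_extCocycles _).2 hy'coc⟩)
        : ExtGrp PM Y n) = QuotientAddGroup.mk m
      rw [extgrp_eq_iff]
      have hκ1 := hκ (-n - 1) (-n) (-n + 1) (by ring) (by ring)
      have huv' : u.f (-n) ≫ z =
          PM.d (-n) (-n + 1) ≫ (κ (-n + 1) (-n) ≫ (m : PM.X (-n) ⟶ Y)) +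
            (m : PM.X (-n) ⟶ Y) := by
        have e := congrArg (fun t => t ≫ (m : PM.X (-n) ⟶ Y)) hκ1
        simp only [Preadditive.sub_comp, Preadditive.add_comp, Category.assoc,
          HomologicalComplex.id_f, Category.id_comp, HomologicalComplex.comp_f] at e
        rw [(mem_extCocycles _).1 m.2, comp_zero, add_zero] at e
        rw [show u.f (-n) ≫ z = u.f (-n) ≫ v.f (-n) ≫ (m : PM.X (-n) ⟶ Y) from rfl, ← e]
        abel
      refine ⟨κ (-n + 1) (-n) ≫ (m : PM.X (-n) ⟶ Y) - u.f (-n + 1) ≫ W, ?_⟩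
      rw [extCocyclesMap_coe]
      have ecomm : u.f (-n) ≫ Q.d (-n) (-n + 1) ≫ W =
          PM.d (-n) (-n + 1) ≫ u.f (-n + 1) ≫ W := by
        rw [← Category.assoc, ← Category.assoc, u.comm (-n) (-n + 1)]
        simp only [hWdef, Category.assoc]
      have eφ : φ.f (-n) ≫ (y' : PN.X (-n) ⟶ Y) =
          u.f (-n) ≫ z - PM.d (-n) (-n + 1) ≫ (u.f (-n + 1) ≫ W) := by
        rw [hφf (-n), Category.assoc, hz'ry, hz'def, Preadditive.comp_sub, ecomm]
      rw [Preadditive.comp_sub, eφ, huv']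
      abel
    · rintro ⟨x, hx⟩
      obtain ⟨xc, rfl⟩ := QuotientAddGroup.mk_surjective x
      have hx' : (QuotientAddGroup.mk (extCocyclesMap φ Y n xc) : ExtGrp PM Y n) =
        QuotientAddGroup.mk m := hx
      rw [extgrp_eq_iff] at hx'
      obtain ⟨w, hw⟩ := hx'
      rw [extCocyclesMap_coe] at hw
      show (QuotientAddGroup.mk (extCocyclesMap ψ Y n m) : ExtGrp PL Y n) = 0
      rw [extgrp_zero_iff, extCocyclesMap_coe]
      set s : Q.X (-n) ⟶ Y := rN (-n) ≫ (xc : PN.X (-n) ⟶ Y) with hsdef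
      have hscoc : Q.d (-n - 1) (-n) ≫ s = 0 := by
        rw [hsdef, ← Category.assoc, hQdrN (-n - 1) (-n), Category.assoc,
          (mem_extCocycles _).1 xc.2, comp_zero]
      have hη1 := hη (-n - 1) (-n) (-n + 1) (by ring) (by ring)
      have e3 : eL (-n) ≫ (v ≫ u).f (-n) ≫ s - eL (-n) ≫ s =
          PL.d (-n) (-n + 1) ≫ (eL (-n + 1) ≫ η (-n + 1) (-n) ≫ s) := by
        have e := congrArg (fun t => eL (-n) ≫ t ≫ s) hη1
        simp only [Preadditive.sub_comp, Preadditive.add_comp, Preadditive.comp_sub,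
          Preadditive.comp_add, Category.assoc, HomologicalComplex.id_f,
          Category.id_comp] at e
        rw [hscoc, comp_zero, comp_zero, add_zero] at e
        rw [← Category.assoc (eL (-n)) (Q.d (-n) (-n + 1)), hdL (-n) (-n + 1),
          Category.assoc] at e
        exact e
      have heLs : eL (-n) ≫ s = 0 := by
        rw [hsdef, ← Category.assoc, heLrN, zero_comp]
      have hus : u.f (-n) ≫ s = φ.f (-n) ≫ (xc : PN.X (-n) ⟶ Y) := by
        rw [hφf (-n), Category.assoc, hsdef]
      have hvu : eL (-n) ≫ (v ≫ u).f (-n) ≫ s =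
          ψ.f (-n) ≫ (φ.f (-n) ≫ (xc : PN.X (-n) ⟶ Y)) := by
        rw [HomologicalComplex.comp_f, Category.assoc, hus, hψf (-n), Category.assoc]
      refine ⟨eL (-n + 1) ≫ η (-n + 1) (-n) ≫ s - ψ.f (-n + 1) ≫ w, ?_⟩
      have ecomm2 : PL.d (-n) (-n + 1) ≫ ψ.f (-n + 1) ≫ w =
          ψ.f (-n) ≫ PM.d (-n) (-n + 1) ≫ w := by
        rw [← Category.assoc, ← Category.assoc, ψ.comm (-n) (-n + 1)]
      rw [Preadditive.comp_sub, ← e3, hvu, heLs, sub_zero, ecomm2, hw,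
        Preadditive.comp_sub]
      abel
  · -- exactness at Extⁿ(L, Y)
    intro n hn y
    refine QuotientAddGroup.induction_on y ?_
    intro g
    constructor
    · intro h0
      have h0' : (QuotientAddGroup.mk (δc n g) : ExtGrp PN Y (n + 1)) = 0 := h0
      rw [extgrp_zero_iff, exists_d_comp_congr PN (show (-(n + 1) : ℤ) + 1 = -n by ring)]
        at h0'
      obtain ⟨w, hw⟩ := h0'
      -- hw : PN.d (-(n+1)) (-n) ≫ w = Θ (-(n+1)) (-n) ≫ g.1
      have hw' : Θ (-n - 1) (-n) ≫ (g : PL.X (-n) ⟶ Y) = PN.d (-n - 1) (-n) ≫ w := by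
        rw [show (-n - 1 : ℤ) = -(n + 1) by ring]
        exact hw.symm
      set z : Q.X (-n) ⟶ Y := rL (-n) ≫ (g : PL.X (-n) ⟶ Y) - rN (-n) ≫ w with hzdef
      have hzcoc : Q.d (-n - 1) (-n) ≫ z = 0 := by
        rw [hzdef, Preadditive.comp_sub, ← Category.assoc, ← Category.assoc,
          hQdrL (-n - 1) (-n), hQdrN (-n - 1) (-n)]
        simp only [Preadditive.add_comp, Category.assoc]
        rw [(mem_extCocycles _).1 g.2, comp_zero, zero_add, hw', ← Preadditive.comp_sub,
          sub_self, comp_zero]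
      have hmcoc : PM.d (-n - 1) (-n) ≫ (u.f (-n) ≫ z) = 0 := by
        rw [← Category.assoc, ← u.comm (-n - 1) (-n), Category.assoc, hzcoc, comp_zero]
      refine ⟨QuotientAddGroup.mk ⟨u.f (-n) ≫ z, (mem_extCocycles _).2 hmcoc⟩, ?_⟩
      show (QuotientAddGroup.mk (extCocyclesMap ψ Y n ⟨u.f (-n) ≫ z, _⟩) : ExtGrp PL Y n)
        = QuotientAddGroup.mk g
      rw [extgrp_eq_iff, extCocyclesMap_coe]
      have hη1 := hη (-n - 1) (-n) (-n + 1) (by ring) (by ring)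
      have e3 : eL (-n) ≫ (v ≫ u).f (-n) ≫ z - eL (-n) ≫ z =
          PL.d (-n) (-n + 1) ≫ (eL (-n + 1) ≫ η (-n + 1) (-n) ≫ z) := by
        have e := congrArg (fun t => eL (-n) ≫ t ≫ z) hη1
        simp only [Preadditive.sub_comp, Preadditive.add_comp, Preadditive.comp_sub,
          Preadditive.comp_add, Category.assoc, HomologicalComplex.id_f,
          Category.id_comp] at e
        rw [hzcoc, comp_zero, comp_zero, add_zero] at e
        rw [← Category.assoc (eL (-n)) (Q.d (-n) (-n + 1)), hdL (-n) (-n + 1),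
          Category.assoc] at e
        exact e
      have heLz : eL (-n) ≫ z = (g : PL.X (-n) ⟶ Y) := by
        rw [hzdef, Preadditive.comp_sub, ← Category.assoc, ← Category.assoc, heLrL,
          heLrN, Category.id_comp, zero_comp, sub_zero]
      have hvu : eL (-n) ≫ (v ≫ u).f (-n) ≫ z = ψ.f (-n) ≫ (u.f (-n) ≫ z) := by
        rw [HomologicalComplex.comp_f, Category.assoc, hψf (-n), Category.assoc]
      refine ⟨eL (-n + 1) ≫ η (-n + 1) (-n) ≫ z, ?_⟩
      rw [← e3, hvu, heLz]
    · rintro ⟨x, hx⟩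
      obtain ⟨xc, rfl⟩ := QuotientAddGroup.mk_surjective x
      have hx' : (QuotientAddGroup.mk (extCocyclesMap ψ Y n xc) : ExtGrp PL Y n) =
        QuotientAddGroup.mk g := hx
      rw [extgrp_eq_iff] at hx'
      obtain ⟨h, hh⟩ := hx'
      rw [extCocyclesMap_coe] at hh
      -- hh : PL.d (-n) (-n+1) ≫ h = ψ.f (-n) ≫ xc.1 - g.1
      show (QuotientAddGroup.mk (δc n g) : ExtGrp PN Y (n + 1)) = 0
      rw [extgrp_zero_iff, exists_d_comp_congr PN (show (-(n + 1) : ℤ) + 1 = -n by ring)]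
      -- want : ∃ w, PN.d (-(n+1)) (-n) ≫ w = Θ (-(n+1)) (-n) ≫ g.1
      have hmz : PM.d (-(n + 1)) (-n) ≫ (xc : PM.X (-n) ⟶ Y) = 0 := by
        rw [show (-(n + 1) : ℤ) = -n - 1 by ring]
        exact (mem_extCocycles _).1 xc.2
      have hΘeL : Θ (-(n + 1)) (-n) ≫ (ψ.f (-n) ≫ (xc : PM.X (-n) ⟶ Y)) =
          -(PN.d (-(n + 1)) (-n) ≫ (eN (-n) ≫ v.f (-n) ≫ (xc : PM.X (-n) ⟶ Y))) := by
        have e : eN (-(n + 1)) ≫ Q.d (-(n + 1)) (-n) ≫ (v.f (-n) ≫ (xc : PM.X (-n) ⟶ Y))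
            = 0 := by
          rw [← Category.assoc (Q.d (-(n + 1)) (-n)), ← v.comm (-(n + 1)) (-n),
            Category.assoc, hmz, comp_zero, comp_zero]
        rw [← Category.assoc, hdN (-(n + 1)) (-n), Preadditive.add_comp, Category.assoc,
          Category.assoc] at e
        have := eq_neg_of_add_eq_zero_left e
        rw [hψf (-n), Category.assoc]
        exact this
      have hΘd : Θ (-(n + 1)) (-n) ≫ (PL.d (-n) (-n + 1) ≫ h) =
          -(PN.d (-(n + 1)) (-n) ≫ (Θ (-n) (-n + 1) ≫ h)) := by
        rw [← Category.assoc, hΘrel (-(n + 1)) (-n) (-n + 1) (by ring) rfl]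
        simp only [Preadditive.neg_comp, Category.assoc]
      refine ⟨-(eN (-n) ≫ v.f (-n) ≫ (xc : PM.X (-n) ⟶ Y)) + Θ (-n) (-n + 1) ≫ h, ?_⟩
      have hgval : (g : PL.X (-n) ⟶ Y) =
          ψ.f (-n) ≫ (xc : PM.X (-n) ⟶ Y) - PL.d (-n) (-n + 1) ≫ h := by
        rw [hh]; abel
      show PN.d (-(n + 1)) (-n) ≫
          (-(eN (-n) ≫ v.f (-n) ≫ (xc : PM.X (-n) ⟶ Y)) + Θ (-n) (-n + 1) ≫ h) =
        Θ (-(n + 1)) (-n) ≫ (g : PL.X (-n) ⟶ Y)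
      rw [Preadditive.comp_add, Preadditive.comp_neg, hgval, Preadditive.comp_sub,
        hΘeL, hΘd]
      abel
  · -- exactness at Ext^{n+1}(N, Y)
    intro n hn y
    refine QuotientAddGroup.induction_on y ?_
    intro x
    constructor
    · intro h0
      have h0' : (QuotientAddGroup.mk (extCocyclesMap φ Y (n + 1) x) :
          ExtGrp PM Y (n + 1)) = 0 := h0
      rw [extgrp_zero_iff, exists_d_comp_congr PM (show (-(n + 1) : ℤ) + 1 = -n by ring)]
        at h0'
      obtain ⟨w, hw⟩ := h0'
      rw [extCocyclesMap_coe, hφf (-(n + 1)), Category.assoc] at hw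
      -- hw : PM.d (-(n+1)) (-n) ≫ w = u.f (-(n+1)) ≫ (rN (-(n+1)) ≫ x.1)
      set sN : Q.X (-(n + 1)) ⟶ Y := rN (-(n + 1)) ≫ (x : PN.X (-(n + 1)) ⟶ Y) with hsN
      have hcoc : Q.d (-(n + 1) - 1) (-(n + 1)) ≫ sN = 0 := by
        rw [hsN, ← Category.assoc, hQdrN (-(n + 1) - 1) (-(n + 1)), Category.assoc,
          (mem_extCocycles _).1 x.2, comp_zero]
      have hη1 := hη (-(n + 1) - 1) (-(n + 1)) (-n) (by ring) (by ring)
      have e3 : (v ≫ u).f (-(n + 1)) ≫ sN - sN =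
          Q.d (-(n + 1)) (-n) ≫ η (-n) (-(n + 1)) ≫ sN := by
        have e := congrArg (fun t => t ≫ sN) hη1
        simp only [Preadditive.sub_comp, Preadditive.add_comp, Category.assoc,
          HomologicalComplex.id_f, Category.id_comp] at e
        rw [hcoc, comp_zero, add_zero] at e
        exact e
      have e1 : (v ≫ u).f (-(n + 1)) ≫ sN = Q.d (-(n + 1)) (-n) ≫ v.f (-n) ≫ w := by
        rw [HomologicalComplex.comp_f, Category.assoc, hsN, ← hw, ← Category.assoc,
          ← Category.assoc, v.comm (-(n + 1)) (-n), Category.assoc]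
      obtain ⟨W, hWdef⟩ : ∃ W' : Q.X (-n) ⟶ Y,
          W' = v.f (-n) ≫ w - η (-n) (-(n + 1)) ≫ sN := ⟨_, rfl⟩
      have hkey : sN = Q.d (-(n + 1)) (-n) ≫ W := by
        rw [hWdef, Preadditive.comp_sub, ← e1, ← e3]
        abel
      have hWL : PL.d (-(n + 1)) (-n) ≫ (eL (-n) ≫ W) = 0 := by
        rw [← Category.assoc, ← hdL (-(n + 1)) (-n), Category.assoc, ← hkey, hsN,
          ← Category.assoc, heLrN, zero_comp]
      have hWLcoc : PL.d (-n - 1) (-n) ≫ (eL (-n) ≫ W) = 0 := by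
        rw [show (-n - 1 : ℤ) = -(n + 1) by ring]
        exact hWL
      refine ⟨QuotientAddGroup.mk ⟨eL (-n) ≫ W, (mem_extCocycles _).2 hWLcoc⟩, ?_⟩
      show (QuotientAddGroup.mk (δc n ⟨eL (-n) ≫ W, (mem_extCocycles _).2 hWLcoc⟩) :
        ExtGrp PN Y (n + 1)) = QuotientAddGroup.mk x
      rw [extgrp_eq_iff, exists_d_comp_congr PN (show (-(n + 1) : ℤ) + 1 = -n by ring)]
      refine ⟨-(eN (-n) ≫ W), ?_⟩
      have e4 : eN (-(n + 1)) ≫ sN = (x : PN.X (-(n + 1)) ⟶ Y) := by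
        rw [hsN, ← Category.assoc, heNrN, Category.id_comp]
      have hx1 : (x : PN.X (-(n + 1)) ⟶ Y) =
          Θ (-(n + 1)) (-n) ≫ (eL (-n) ≫ W) + PN.d (-(n + 1)) (-n) ≫ (eN (-n) ≫ W) := by
        rw [← e4, hkey, ← Category.assoc, hdN (-(n + 1)) (-n), Preadditive.add_comp,
          Category.assoc, Category.assoc]
      show PN.d (-(n + 1)) (-n) ≫ (-(eN (-n) ≫ W)) =
        Θ (-(n + 1)) (-n) ≫ (eL (-n) ≫ W) - (x : PN.X (-(n + 1)) ⟶ Y)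
      rw [hx1, Preadditive.comp_neg]
      abel
    · rintro ⟨xg, hxg⟩
      obtain ⟨gc, rfl⟩ := QuotientAddGroup.mk_surjective xg
      rw [← hxg]
      show (QuotientAddGroup.mk (extCocyclesMap φ Y (n + 1) (δc n gc)) :
        ExtGrp PM Y (n + 1)) = 0
      rw [extgrp_zero_iff, exists_d_comp_congr PM (show (-(n + 1) : ℤ) + 1 = -n by ring),
        extCocyclesMap_coe]
      refine ⟨u.f (-n) ≫ (rL (-n) ≫ (gc : PL.X (-n) ⟶ Y)), ?_⟩
      have hgcoc : PL.d (-(n + 1)) (-n) ≫ (gc : PL.X (-n) ⟶ Y) = 0 := by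
        rw [show (-(n + 1) : ℤ) = -n - 1 by ring]
        exact (mem_extCocycles _).1 gc.2
      have eQ : Q.d (-(n + 1)) (-n) ≫ (rL (-n) ≫ (gc : PL.X (-n) ⟶ Y)) =
          rN (-(n + 1)) ≫ (Θ (-(n + 1)) (-n) ≫ (gc : PL.X (-n) ⟶ Y)) := by
        rw [← Category.assoc, hQdrL (-(n + 1)) (-n)]
        simp only [Preadditive.add_comp, Category.assoc]
        rw [hgcoc, comp_zero, zero_add]
      rw [← Category.assoc (PM.d (-(n + 1)) (-n)), ← u.comm (-(n + 1)) (-n),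
        Category.assoc, eQ, hφf (-(n + 1)), Category.assoc]
      rfl
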